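/- Fix N ≥ 1 and 0 < ε < 1/2, and define the family of distributions P_{XYZ|ABC} on triples (x,y,z) ∈ {+1,−1}³, constant in the settings (a,b,c), which assigns probability ε to (−1,−1,−1), probability 1−ε to (+1,+1,+1), and probability 0 to every other triple. Then this family satisfies all the non-signalling conditions, its chained-Bell quantity satisfies I_N = 1, its bias satisfies ν_N = 1/2 − ε, and the variational distance between the conditional distribution P_{Z|X=−1} and P_Z equals 1 − ε, which equals I_N/2 + ν_N. Hence the bound D(P_{Z|a,b,c,X=x}, P_{Z|a,b,c}) ≤ I_N/2 + ν_N is tight. -/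
import Mathlib


noncomputable section

open Finset

/-- The two outcomes `+1` and `-1`. -/
def pm : Finset ℤ := {1, -1}

/-- Settings on side A: `{0, 2, 4, …, 2N-2}`. -/
def SA (N : ℕ) : Finset ℕ := (Finset.range N).image (fun k => 2 * k)

/-- Settings on side B: `{1, 3, 5, …, 2N-1}`. -/
def SB (N : ℕ) : Finset ℕ := (Finset.range N).image (fun k => 2 * k + 1)

section
variable {C : Type}

/-- Marginal distribution of `(X, Y)` given settings `(a, b, c)` (here `z ∈ {+1,-1}`). -/
def PXY (P : ℕ → ℕ → C → ℤ → ℤ → ℤ → ℝ) (a b : ℕ) (c : C) (x y : ℤ) : ℝ :=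
  ∑ z ∈ pm, P a b c x y z

/-- Marginal distribution of `(X, Z)` given settings `(a, b, c)`. -/
def PXZ (P : ℕ → ℕ → C → ℤ → ℤ → ℤ → ℝ) (a b : ℕ) (c : C) (x z : ℤ) : ℝ :=
  ∑ y ∈ pm, P a b c x y z

/-- Marginal distribution of `(Y, Z)` given settings `(a, b, c)`. -/
def PYZ (P : ℕ → ℕ → C → ℤ → ℤ → ℤ → ℝ) (a b : ℕ) (c : C) (y z : ℤ) : ℝ :=
  ∑ x ∈ pm, P a b c x y z

/-- Marginal distribution of `X` given settings `(a, b, c)`. -/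
def PX (P : ℕ → ℕ → C → ℤ → ℤ → ℤ → ℝ) (a b : ℕ) (c : C) (x : ℤ) : ℝ :=
  ∑ y ∈ pm, ∑ z ∈ pm, P a b c x y z

/-- Marginal distribution of `Z` given settings `(a, b, c)`. -/
def PZ (P : ℕ → ℕ → C → ℤ → ℤ → ℤ → ℝ) (a b : ℕ) (c : C) (z : ℤ) : ℝ :=
  ∑ x ∈ pm, ∑ y ∈ pm, P a b c x y z

/-- Conditional distribution of `Z` given settings `(a, b, c)` and outcome `X = x`. -/
def PZcond (P : ℕ → ℕ → C → ℤ → ℤ → ℤ → ℝ) (a b : ℕ) (c : C) (x z : ℤ) : ℝ :=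
  (∑ y ∈ pm, P a b c x y z) / PX P a b c x

/-- Probability that `X = Y` given settings `(a, b, c)`. -/
def Pagree (P : ℕ → ℕ → C → ℤ → ℤ → ℤ → ℝ) (a b : ℕ) (c : C) : ℝ :=
  PXY P a b c 1 1 + PXY P a b c (-1) (-1)

/-- Probability that `X ≠ Y` given settings `(a, b, c)`. -/
def Pdiff (P : ℕ → ℕ → C → ℤ → ℤ → ℤ → ℝ) (a b : ℕ) (c : C) : ℝ :=
  PXY P a b c 1 (-1) + PXY P a b c (-1) 1

/-- Chained-Bell quantity `I_N` of the two-party marginal, computed at setting `c`. -/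
def IN (P : ℕ → ℕ → C → ℤ → ℤ → ℤ → ℝ) (N : ℕ) (c : C) : ℝ :=
  Pagree P 0 (2 * N - 1) c +
    ∑ p ∈ (SA N ×ˢ SB N).filter (fun p => p.1 + 1 = p.2 ∨ p.2 + 1 = p.1),
      Pdiff P p.1 p.2 c

/-- Bias `ν_N`: maximum over `a` of the variational distance between the marginal of `X`
given setting `a` and the uniform distribution on `{+1, -1}`. -/
def biasN (P : ℕ → ℕ → C → ℤ → ℤ → ℤ → ℝ) (N : ℕ) (b : ℕ) (c : C) : ℝ :=
  ⨆ a ∈ SA N, (1 / 2) * (|PX P a b c 1 - 1 / 2| + |PX P a b c (-1) - 1 / 2|)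

end

/-- The distribution on triples `(x, y, z) ∈ {+1,-1}³` assigning probability `ε` to
`(-1,-1,-1)`, probability `1 - ε` to `(+1,+1,+1)` and `0` to every other triple,
viewed as a family constant in the settings `(a, b, c)`. -/
def Ptight (C : Type) (ε : ℝ) : ℕ → ℕ → C → ℤ → ℤ → ℤ → ℝ :=
  fun _ _ _ x y z =>
    if x = -1 ∧ y = -1 ∧ z = -1 then ε
    else if x = 1 ∧ y = 1 ∧ z = 1 then 1 - ε
    else 0

/-- **tightness.** The family `Ptight` is non-signalling, has `I_N = 1`,
bias `ν_N = 1/2 - ε`, and `D(P_{Z|X=-1}, P_Z) = 1 - ε = I_N/2 + ν_N`.  Hence the bound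
`D(P_{Z|a,b,c,X=x}, P_{Z|a,b,c}) ≤ I_N/2 + ν_N` is tight. -/
theorem statement6 {C : Type} (N : ℕ) (hN : 1 ≤ N) (ε : ℝ) (hε0 : 0 < ε)
    (hε : ε < 1 / 2) :
    (∀ (a b : ℕ) (c c' : C) (x y : ℤ),
      PXY (Ptight C ε) a b c x y = PXY (Ptight C ε) a b c' x y) ∧
    (∀ (a b b' : ℕ) (c : C) (x z : ℤ),
      PXZ (Ptight C ε) a b c x z = PXZ (Ptight C ε) a b' c x z) ∧
    (∀ (a a' b : ℕ) (c : C) (y z : ℤ),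
      PYZ (Ptight C ε) a b c y z = PYZ (Ptight C ε) a' b c y z) ∧
    (∀ c : C, IN (Ptight C ε) N c = 1) ∧
    (∀ (b : ℕ) (c : C), biasN (Ptight C ε) N b c = 1 / 2 - ε) ∧
    (∀ (a b : ℕ) (c : C),
      (1 / 2) * ∑ z ∈ pm,
          |PZcond (Ptight C ε) a b c (-1) z - PZ (Ptight C ε) a b c z| = 1 - ε) ∧
    (∀ (a b : ℕ) (c : C),
      (1 / 2) * ∑ z ∈ pm,
          |PZcond (Ptight C ε) a b c (-1) z - PZ (Ptight C ε) a b c z| =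
        IN (Ptight C ε) N c / 2 + biasN (Ptight C ε) N b c) := by
  have hpm : ∀ f : ℤ → ℝ, ∑ z ∈ pm, f z = f 1 + f (-1) := by
    intro f; simp [pm]
  have hε2 : (0:ℝ) < 1/2 - ε := by linarith
  have hIN : ∀ c : C, IN (Ptight C ε) N c = 1 := by
    intro c
    have hAg : Pagree (Ptight C ε) 0 (2 * N - 1) c = 1 := by
      simp [Pagree, PXY, hpm, Ptight]
    have hSum : ∑ p ∈ (SA N ×ˢ SB N).filter (fun p => p.1 + 1 = p.2 ∨ p.2 + 1 = p.1),
        Pdiff (Ptight C ε) p.1 p.2 c = 0 := by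
      apply Finset.sum_eq_zero
      intro p _
      simp [Pdiff, PXY, hpm, Ptight]
    rw [IN, hAg, hSum]; ring
  have hPX1 : ∀ (a b : ℕ) (c : C), PX (Ptight C ε) a b c 1 = 1 - ε := by
    intro a b c; simp [PX, hpm, Ptight]
  have hPXm : ∀ (a b : ℕ) (c : C), PX (Ptight C ε) a b c (-1) = ε := by
    intro a b c; simp [PX, hpm, Ptight]
  have hbias : ∀ (b : ℕ) (c : C), biasN (Ptight C ε) N b c = 1 / 2 - ε := by
    intro b c
    have hconst : ∀ a : ℕ,
        (1 / 2) * (|PX (Ptight C ε) a b c 1 - 1 / 2| +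
          |PX (Ptight C ε) a b c (-1) - 1 / 2|) = 1 / 2 - ε := by
      intro a
      rw [hPX1, hPXm]
      rw [abs_of_nonneg (by linarith), abs_of_nonpos (by linarith)]
      ring
    have h0 : (0 : ℕ) ∈ SA N := by
      simp only [SA, Finset.mem_image]
      exact ⟨0, Finset.mem_range.mpr hN, rfl⟩
    unfold biasN
    apply le_antisymm
    · apply Real.iSup_le _ (by linarith)
      intro a
      apply Real.iSup_le _ (by linarith)
      intro _
      exact le_of_eq (hconst a)
    · have : (1/2 - ε : ℝ) = ⨆ _ : (0:ℕ) ∈ SA N,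
          (1 / 2) * (|PX (Ptight C ε) 0 b c 1 - 1 / 2| +
            |PX (Ptight C ε) 0 b c (-1) - 1 / 2|) := by
        rw [ciSup_pos h0, hconst 0]
      rw [this]
      apply le_ciSup (f := fun a : ℕ => ⨆ _ : a ∈ SA N,
          (1 / 2) * (|PX (Ptight C ε) a b c 1 - 1 / 2| +
            |PX (Ptight C ε) a b c (-1) - 1 / 2|)) (c := 0)
      refine ⟨1/2 - ε, ?_⟩
      rintro x ⟨a, rfl⟩
      apply Real.iSup_le _ (by linarith)
      intro _
      exact le_of_eq (hconst a)
  have hD : ∀ (a b : ℕ) (c : C),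
      (1 / 2) * ∑ z ∈ pm,
        |PZcond (Ptight C ε) a b c (-1) z - PZ (Ptight C ε) a b c z| = 1 - ε := by
    intro a b c
    have hne : ε ≠ 0 := ne_of_gt hε0
    rw [hpm]
    have h1 : PZcond (Ptight C ε) a b c (-1) 1 = 0 := by
      simp [PZcond, hpm, Ptight]
    have h2 : PZcond (Ptight C ε) a b c (-1) (-1) = 1 := by
      simp [PZcond, PX, hpm, Ptight, hne]
    have h3 : PZ (Ptight C ε) a b c 1 = 1 - ε := by
      simp [PZ, hpm, Ptight]
    have h4 : PZ (Ptight C ε) a b c (-1) = ε := by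
      simp [PZ, hpm, Ptight]
    rw [h1, h2, h3, h4, abs_of_nonpos (by linarith), abs_of_nonneg (by linarith)]
    ring
  refine ⟨?_, ?_, ?_, hIN, hbias, hD, ?_⟩
  · intro a b c c' x y; simp [PXY, Ptight]
  · intro a b b' c x z; simp [PXZ, Ptight]
  · intro a a' b c y z; simp [PYZ, Ptight]
  · intro a b c
    rw [hD a b c, hIN c, hbias b c]; ring
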